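/- The double collection identity: the expected number of uniform samples from n coupon types until every type has been collected at least m times equals n ∫_0^∞ [1 - (1 - S_m(x)e^{-x})^n] dx. -/

import Mathlib

open MeasureTheory
open scoped ENNReal

/-- Partial exponential sum `S_m(x) = ∑_{i=0}^{m-1} x^i/i!`. -/
noncomputable def expS (m : ℕ) (x : ℝ) : ℝ :=
  ∑ i ∈ Finset.range m, x ^ i / (Nat.factorial i : ℝ)

namespace DDC

open Finset

/-! ### Combinatorics: counting functions with all fibers of size at least `m` -/

/-- Number of functions `α → Fin n` all of whose fibers have at least `m` elements. -/
def Acard (n m : ℕ) (α : Type*) [Fintype α] [DecidableEq α] : ℕ :=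
  ((univ : Finset (α → Fin n)).filter
    (fun f => ∀ c, m ≤ (univ.filter (fun a => f a = c)).card)).card

abbrev A (n m t : ℕ) : ℕ := Acard n m (Fin t)

lemma Acard_le (n m : ℕ) (α : Type*) [Fintype α] [DecidableEq α] :
    Acard n m α ≤ n ^ Fintype.card α := by
  classical
  calc Acard n m α ≤ (univ : Finset (α → Fin n)).card := card_filter_le _ _
  _ = n ^ Fintype.card α := by simp [card_univ, Fintype.card_fun]

lemma Acard_congr (n m : ℕ) {α β : Type*} [Fintype α] [DecidableEq α]
    [Fintype β] [DecidableEq β] (e : α ≃ β) : Acard n m α = Acard n m β := by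
  classical
  apply Finset.card_bij (fun f _ => f ∘ e.symm)
  · intro f hf
    simp only [mem_filter, mem_univ, true_and] at hf ⊢
    intro c
    refine le_trans (hf c) (le_of_eq ?_)
    apply Finset.card_bij (fun a _ => e a)
    · intro a ha; simp only [mem_filter, mem_univ, true_and, Function.comp] at ha ⊢
      simpa using ha
    · intro a _ a' _ h; exact e.injective h
    · intro b hb; refine ⟨e.symm b, ?_, by simp⟩
      simp only [mem_filter, mem_univ, true_and, Function.comp] at hb ⊢
      exact hb
  · intro f _ f' _ h
    funext a
    have := congrFun h (e a); simpa using this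
  · intro g hg
    refine ⟨g ∘ e, ?_, by funext b; simp⟩
    simp only [mem_filter, mem_univ, true_and, Function.comp] at hg ⊢
    intro c
    refine le_trans (hg c) (le_of_eq ?_)
    apply Finset.card_bij (fun b _ => e.symm b)
    · intro b hb; simp only [mem_filter, mem_univ, true_and] at hb ⊢; simpa using hb
    · intro b _ b' _ h; exact e.symm.injective h
    · intro a ha; refine ⟨e a, ?_, by simp⟩
      simp only [mem_filter, mem_univ, true_and] at ha ⊢; simpa using ha

lemma A_zero (m t : ℕ) : A 0 m t = if t = 0 then 1 else 0 := by
  classical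
  unfold A Acard
  rw [Finset.filter_true_of_mem (by intro f _; intro c; exact absurd c.2 (by omega))]
  rw [card_univ, Fintype.card_fun]
  cases t with
  | zero => simp
  | succ t => simp [Fintype.card_fin, pow_succ]

lemma Acard_succ (n m : ℕ) (α : Type*) [Fintype α] [DecidableEq α] :
    Acard (n+1) m α = ∑ k ∈ range (Fintype.card α + 1),
      if m ≤ k then (Fintype.card α).choose k * A n m (Fintype.card α - k) else 0 := by
  classical
  set t := Fintype.card α with ht
  have step1 : Acard (n+1) m α = ∑ s ∈ (univ : Finset (Finset α)),
      (((univ : Finset (α → Fin (n+1))).filter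
        (fun f => ∀ c, m ≤ (univ.filter (fun a => f a = c)).card)).filter
        (fun f => univ.filter (fun a => f a = Fin.last n) = s)).card := by
    exact Finset.card_eq_sum_card_fiberwise (fun f _ => mem_univ _)
  have step2 : ∀ s : Finset α,
      (((univ : Finset (α → Fin (n+1))).filter
        (fun f => ∀ c, m ≤ (univ.filter (fun a => f a = c)).card)).filter
        (fun f => univ.filter (fun a => f a = Fin.last n) = s)).card
      = if m ≤ s.card then A n m (t - s.card) else 0 := by
    intro s
    by_cases hms : m ≤ s.card
    · rw [if_pos hms]
      have hcomp : Acard n m (↥(sᶜ : Finset α)) = A n m (t - s.card) := by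
        refine Acard_congr n m (Fintype.equivFinOfCardEq ?_)
        simp [Finset.card_compl, ht]
      rw [← hcomp]
      unfold Acard
      have hmem : ∀ (f : α → Fin (n+1)),
          (univ.filter (fun a => f a = Fin.last n) = s) →
          ∀ a : α, (f a = Fin.last n ↔ a ∈ s) := by
        intro f hf a
        constructor
        · intro h; rw [← hf]; simp [h]
        · intro h; rw [← hf] at h; simpa using h
      refine Finset.card_bij'
        (fun f hf => fun a : ↥(sᶜ : Finset α) =>
          (f a.1).castPred (by
            have hfs := (mem_filter.mp hf).2
            have := hmem f hfs a.1
            have ha : a.1 ∉ s := Finset.mem_compl.mp a.2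
            exact fun h => ha (this.mp h)))
        (fun g hg => fun a : α =>
          if h : a ∈ s then Fin.last n else
            (g ⟨a, by simpa using h⟩).castSucc) ?_ ?_ ?_ ?_
      · -- maps into good functions on sᶜ
        intro f hf
        have hgood := (mem_filter.mp (mem_filter.mp hf).1).2
        have hfs := (mem_filter.mp hf).2
        simp only [mem_filter, mem_univ, true_and]
        intro c
        refine le_trans (hgood c.castSucc) (le_of_eq ?_)
        apply Finset.card_bij (fun (a : α) ha => (⟨a, by
            have := (hmem f hfs a)
            have h1 : f a = c.castSucc := (mem_filter.mp ha).2
            have : a ∉ s := fun hs => by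
              have := (hmem f hfs a).mpr hs
              rw [h1] at this
              exact (Fin.castSucc_lt_last c).ne this
            simpa using this⟩ : ↥(sᶜ : Finset α)))
        · intro a ha
          simp only [mem_filter, mem_univ, true_and] at ha ⊢
          simp [ha]
        · intro a ha a' ha' h
          simpa using congrArg Subtype.val h
        · intro b hb
          simp only [mem_filter, mem_univ, true_and] at hb
          refine ⟨b.1, ?_, by simp⟩
          simp only [mem_filter, mem_univ, true_and]
          have : (f b.1).castPred _ = c := hb
          rw [← this, Fin.castSucc_castPred]
      · -- j maps into the fiber filter
        intro g hg
        have hgood := (mem_filter.mp hg).2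
        simp only [mem_filter, mem_univ, true_and]
        have hfib : (univ.filter (fun a => (if h : a ∈ s then Fin.last n
            else (g ⟨a, by simpa using h⟩).castSucc) = Fin.last n)) = s := by
          ext a
          simp only [mem_filter, mem_univ, true_and]
          by_cases h : a ∈ s
          · simp [h]
          · rw [dif_neg h]
            constructor
            · intro hc; exact absurd hc (Fin.castSucc_lt_last _).ne
            · intro hc; exact absurd hc h
        refine ⟨?_, hfib⟩
        intro c
        refine Fin.lastCases ?_ ?_ c
        · rw [hfib]; exact hms
        · intro c'
          refine le_trans (hgood c') (le_of_eq ?_)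
          apply Finset.card_bij (fun (a : ↥(sᶜ : Finset α)) ha => a.1)
          · intro a ha
            simp only [mem_filter, mem_univ, true_and] at ha ⊢
            have h1 : a.1 ∉ s := Finset.mem_compl.mp a.2
            rw [dif_neg h1]
            rw [show (⟨a.1, by simpa using h1⟩ : ↥(sᶜ : Finset α)) = a from Subtype.ext rfl, ha]
          · intro a _ a' _ h; exact Subtype.ext h
          · intro b hb
            simp only [mem_filter, mem_univ, true_and] at hb
            by_cases h1 : b ∈ s
            · rw [dif_pos h1] at hb
              exact absurd hb.symm (Fin.castSucc_lt_last c').ne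
            · rw [dif_neg h1] at hb
              refine ⟨⟨b, by simpa using h1⟩, ?_, rfl⟩
              simp only [mem_filter, mem_univ, true_and]
              exact Fin.castSucc_injective _ hb
      · -- left inverse
        intro f hf
        have hfs := (mem_filter.mp hf).2
        funext a
        by_cases h : a ∈ s
        · simp only [dif_pos h]
          exact ((hmem f hfs a).mpr h).symm
        · simp only [dif_neg h]
          exact Fin.castSucc_castPred _ _
      · -- right inverse
        intro g hg
        funext a
        have h1 : a.1 ∉ s := Finset.mem_compl.mp a.2
        simp only [dif_neg h1]
        rw [Fin.castPred_castSucc]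
    · rw [if_neg hms]
      rw [Finset.card_eq_zero]
      rw [Finset.filter_eq_empty_iff]
      intro f hf
      intro hfib
      have hgood := (mem_filter.mp hf).2
      have := hgood (Fin.last n)
      rw [hfib] at this
      exact hms this
  rw [step1]
  have e1 : ∑ s ∈ (univ : Finset (Finset α)),
      (((univ : Finset (α → Fin (n+1))).filter
        (fun f => ∀ c, m ≤ (univ.filter (fun a => f a = c)).card)).filter
        (fun f => univ.filter (fun a => f a = Fin.last n) = s)).card
      = ∑ s ∈ (univ : Finset α).powerset,
        (fun k => if m ≤ k then A n m (t - k) else 0) s.card := by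
    rw [Finset.powerset_univ]
    exact Finset.sum_congr rfl (fun s _ => step2 s)
  rw [e1, Finset.sum_powerset_apply_card (fun k => if m ≤ k then A n m (t - k) else 0),
    card_univ]
  apply Finset.sum_congr rfl
  intro k _
  rw [smul_eq_mul]
  split <;> simp [ht]

lemma A_le (n m t : ℕ) : A n m t ≤ n ^ t := by
  simpa using Acard_le n m (Fin t)

lemma A_succ (n m t : ℕ) : A (n+1) m t = ∑ k ∈ range (t + 1),
    if m ≤ k then t.choose k * A n m (t - k) else 0 := by
  simpa using Acard_succ n m (Fin t)

/-! ### The exponential generating function identity -/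

lemma summable_norm_A (n m : ℕ) (x : ℝ) :
    Summable (fun t => ‖(A n m t : ℝ) * x ^ t / (t.factorial : ℝ)‖) := by
  refine Summable.of_nonneg_of_le (fun t => norm_nonneg _) (fun t => ?_)
    (Real.summable_pow_div_factorial ((n : ℝ) * |x|))
  have h1 : ‖(A n m t : ℝ) * x ^ t / (t.factorial : ℝ)‖
      = (A n m t : ℝ) * |x| ^ t / (t.factorial : ℝ) := by
    rw [Real.norm_eq_abs, abs_div, abs_mul, abs_pow, Nat.abs_cast, Nat.abs_cast]
  rw [h1, mul_pow]
  gcongr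
  exact_mod_cast A_le n m t

lemma summable_A (n m : ℕ) (x : ℝ) :
    Summable (fun t => (A n m t : ℝ) * x ^ t / (t.factorial : ℝ)) :=
  (summable_norm_A n m x).of_norm

lemma exp_tsum (x : ℝ) : Real.exp x = ∑' k, x ^ k / (k.factorial : ℝ) := by
  rw [Real.exp_eq_exp_ℝ, NormedSpace.exp_eq_tsum_div]

lemma summable_norm_bm (m : ℕ) (x : ℝ) :
    Summable (fun k => ‖if m ≤ k then x ^ k / (k.factorial : ℝ) else 0‖) := by
  refine Summable.of_nonneg_of_le (fun t => norm_nonneg _) (fun k => ?_)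
    (Real.summable_pow_div_factorial |x|)
  split
  · rw [Real.norm_eq_abs, abs_div, abs_pow, Nat.abs_cast]
  · simpa using by positivity

lemma exp_sub_expS (m : ℕ) (x : ℝ) :
    Real.exp x - expS m x = ∑' k, (if m ≤ k then x ^ k / (k.factorial : ℝ) else 0) := by
  have hsum2 : Summable (fun k => if k < m then x ^ k / (k.factorial : ℝ) else 0) :=
    summable_of_ne_finset_zero (s := Finset.range m)
      (fun k hk => by rw [if_neg]; simpa using hk)
  have hpt : ∀ k, x ^ k / (k.factorial : ℝ)
      = (if m ≤ k then x ^ k / (k.factorial : ℝ) else 0)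
        + (if k < m then x ^ k / (k.factorial : ℝ) else 0) := by
    intro k
    rcases le_or_gt m k with h | h
    · rw [if_pos h, if_neg (by omega), add_zero]
    · rw [if_neg (by omega), if_pos h, zero_add]
  have h2 : (∑' k, (if k < m then x ^ k / (k.factorial : ℝ) else 0)) = expS m x := by
    rw [tsum_eq_sum (s := Finset.range m) (fun k hk => by rw [if_neg]; simpa using hk)]
    exact Finset.sum_congr rfl (fun k hk => by rw [if_pos (by simpa using hk)])
  rw [exp_tsum, tsum_congr hpt,
    Summable.tsum_add ((summable_norm_bm m x).of_norm) hsum2, h2]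
  ring

/-- The exponential generating function identity. -/
lemma egf (n m : ℕ) (x : ℝ) :
    ∑' t, (A n m t : ℝ) * x ^ t / (t.factorial : ℝ)
      = (Real.exp x - expS m x) ^ n := by
  induction n with
  | zero =>
    rw [pow_zero]
    rw [tsum_eq_single 0 (fun t ht => by simp [A_zero, ht])]
    simp [A_zero]
  | succ n ih =>
    rw [pow_succ, ← ih, exp_sub_expS m x, mul_comm]
    rw [tsum_mul_tsum_eq_tsum_sum_antidiagonal_of_summable_norm
      (summable_norm_bm m x) (summable_norm_A n m x)]
    apply tsum_congr
    intro t
    rw [Finset.Nat.sum_antidiagonal_eq_sum_range_succ_mk]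
    rw [A_succ, Nat.cast_sum, Finset.sum_mul, Finset.sum_div]
    apply Finset.sum_congr rfl
    intro k hk
    have hkt : k ≤ t := by simpa using Nat.lt_succ_iff.mp (Finset.mem_range.mp hk)
    by_cases hmk : m ≤ k
    · rw [if_pos hmk]
      push_cast [if_pos hmk]
      have hfact : (t.choose k : ℝ) * (k.factorial : ℝ) * ((t-k).factorial : ℝ)
          = (t.factorial : ℝ) := by
        exact_mod_cast congrArg (Nat.cast (R := ℝ))
          (Nat.choose_mul_factorial_mul_factorial hkt)
      have hx : x ^ k * x ^ (t - k) = x ^ t := by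
        rw [← pow_add]; congr 1; omega
      have hk0 : (k.factorial : ℝ) ≠ 0 := by positivity
      have hk1 : ((t-k).factorial : ℝ) ≠ 0 := by positivity
      have hk2 : (t.factorial : ℝ) ≠ 0 := by positivity
      field_simp
      rw [← hfact, ← hx]
      ring
    · rw [if_neg hmk, if_neg hmk]
      push_cast
      ring

/-! ### Gamma-type integrals -/

lemma integrableOn_poly_exp (t : ℕ) (r : ℝ) (hr : 0 < r) :
    IntegrableOn (fun x : ℝ => x ^ t * Real.exp (-(r * x))) (Set.Ioi 0) := by
  have h := integrableOn_rpow_mul_exp_neg_mul_rpow (p := 1) (s := t) (b := r)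
    (lt_of_lt_of_le neg_one_lt_zero (Nat.cast_nonneg t)) one_pos hr
  apply h.congr_fun ?_ measurableSet_Ioi
  intro x hx
  show x ^ (t:ℝ) * Real.exp (-r * x ^ (1:ℝ)) = x ^ t * Real.exp (-(r * x))
  rw [Real.rpow_one, Real.rpow_natCast, neg_mul]

lemma integral_poly_exp (t : ℕ) (r : ℝ) (hr : 0 < r) :
    ∫ x in Set.Ioi (0:ℝ), x ^ t * Real.exp (-(r * x))
      = (t.factorial : ℝ) / r ^ (t+1) := by
  have h := Real.integral_rpow_mul_exp_neg_mul_Ioi (a := (t:ℝ)+1) (r := r) (by positivity) hr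
  have h2 : ∫ x in Set.Ioi (0:ℝ), x ^ t * Real.exp (-(r * x))
      = ∫ x in Set.Ioi (0:ℝ), x ^ ((t:ℝ)+1-1) * Real.exp (-(r * x)) := by
    apply setIntegral_congr_fun measurableSet_Ioi
    intro x hx
    show x ^ t * Real.exp (-(r * x)) = x ^ ((t:ℝ)+1-1) * Real.exp (-(r * x))
    have he : ((t:ℝ)+1-1) = (t:ℝ) := by ring
    rw [he, Real.rpow_natCast]
  rw [h2, h, Real.Gamma_nat_eq_factorial]
  rw [show ((t:ℝ)+1) = ((t+1 : ℕ) : ℝ) by push_cast; ring, Real.rpow_natCast]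
  rw [one_div, inv_pow, inv_mul_eq_div]

lemma lintegral_poly_exp (t : ℕ) (r : ℝ) (hr : 0 < r) :
    ∫⁻ x in Set.Ioi (0:ℝ), ENNReal.ofReal (x ^ t * Real.exp (-(r * x)))
      = ENNReal.ofReal ((t.factorial : ℝ) / r ^ (t+1)) := by
  rw [← integral_poly_exp t r hr]
  rw [← ofReal_integral_eq_lintegral_ofReal (integrableOn_poly_exp t r hr)]
  exact (ae_restrict_iff' measurableSet_Ioi).mpr (ae_of_all _
    (fun x hx => by
      have hx0 : (0:ℝ) < x := hx
      positivity))

/-! ### The key analytic identity -/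

lemma summable_c1 (n : ℕ) (x : ℝ) :
    Summable (fun t => ((n:ℝ)^(t+1) / t.factorial) * (x ^ t * Real.exp (-(n*x)))) := by
  apply Summable.of_norm
  refine Summable.of_nonneg_of_le (fun t => norm_nonneg _) (fun t => ?_)
    ((Real.summable_pow_div_factorial ((n:ℝ) * |x|)).mul_right
      ((n:ℝ) * Real.exp (-(n*x)))).norm
  rw [Real.norm_eq_abs, Real.norm_eq_abs]
  have h1 : |((n:ℝ)^(t+1) / t.factorial) * (x ^ t * Real.exp (-(n*x)))|
      = ((n:ℝ)^(t+1) / t.factorial) * (|x| ^ t * Real.exp (-(n*x))) := by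
    rw [abs_mul, abs_mul, abs_pow, abs_of_nonneg (by positivity : (0:ℝ) ≤ (n:ℝ)^(t+1) / t.factorial),
      abs_of_nonneg (Real.exp_pos _).le]
  rw [h1, abs_of_nonneg (by positivity : (0:ℝ) ≤ ((n:ℝ) * |x|)^t / t.factorial * ((n:ℝ) * Real.exp (-(n*x))))]
  rw [mul_pow]
  rw [pow_succ']
  ring_nf
  exact le_of_eq (by ring)

lemma summable_c2 (n m : ℕ) (x : ℝ) :
    Summable (fun t => ((n:ℝ) * A n m t / t.factorial) * (x ^ t * Real.exp (-(n*x)))) := by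
  have h := ((summable_A n m x).mul_left ((n:ℝ) * Real.exp (-(n*x))))
  apply h.congr
  intro t
  field_simp

lemma integrand_series (n m : ℕ) (x : ℝ) :
    (n:ℝ) * (1 - (1 - expS m x * Real.exp (-x)) ^ n)
      = ∑' t, ((((n:ℝ)^(t+1) - n * A n m t) / t.factorial)
          * (x ^ t * Real.exp (-(n*x)))) := by
  have hE : Real.exp (-x) * Real.exp x = 1 := by
    rw [← Real.exp_add]; simp
  have h1 : (1 - expS m x * Real.exp (-x)) = Real.exp (-x) * (Real.exp x - expS m x) := by
    rw [mul_sub, hE]; ring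
  have h2 : (1 - expS m x * Real.exp (-x)) ^ n
      = Real.exp (-((n:ℝ)*x)) * (Real.exp x - expS m x) ^ n := by
    rw [h1, mul_pow, ← Real.exp_nat_mul]
    congr 2
    push_cast; ring
  have h3 : (n:ℝ) * (1 - expS m x * Real.exp (-x)) ^ n
      = ∑' t, ((n:ℝ) * A n m t / t.factorial) * (x ^ t * Real.exp (-(n*x))) := by
    rw [h2, ← egf n m x, ← tsum_mul_left, ← tsum_mul_left]
    apply tsum_congr
    intro t
    field_simp
  have h4 : (n:ℝ) = ∑' t, ((n:ℝ)^(t+1) / t.factorial) * (x ^ t * Real.exp (-(n*x))) := by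
    have : ∀ t : ℕ, ((n:ℝ)^(t+1) / t.factorial) * (x ^ t * Real.exp (-(n*x)))
        = ((n:ℝ) * Real.exp (-(n*x))) * (((n:ℝ)*x) ^ t / t.factorial) := by
      intro t
      rw [mul_pow, pow_succ']
      field_simp
    rw [tsum_congr this, tsum_mul_left, ← exp_tsum ((n:ℝ)*x)]
    rw [mul_assoc, ← Real.exp_add]
    simp
  calc (n:ℝ) * (1 - (1 - expS m x * Real.exp (-x)) ^ n)
      = (n:ℝ) - (n:ℝ) * (1 - expS m x * Real.exp (-x)) ^ n := by ring
    _ = ∑' t, (((n:ℝ)^(t+1) / t.factorial) * (x ^ t * Real.exp (-(n*x)))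
          - ((n:ℝ) * A n m t / t.factorial) * (x ^ t * Real.exp (-(n*x)))) := by
        rw [h3]
        nth_rewrite 1 [h4]
        exact (Summable.tsum_sub (summable_c1 n x) (summable_c2 n m x)).symm
    _ = _ := by
        apply tsum_congr; intro t; ring

lemma summable_cc (n m : ℕ) (x : ℝ) :
    Summable (fun t => (((n:ℝ)^(t+1) - n * A n m t) / t.factorial)
      * (x ^ t * Real.exp (-(n*x)))) := by
  apply ((summable_c1 n x).sub (summable_c2 n m x)).congr
  intro t; ring

lemma cc_nonneg (n m : ℕ) (t : ℕ) : 0 ≤ ((n:ℝ)^(t+1) - n * A n m t) / t.factorial := by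
  apply div_nonneg _ (by positivity)
  have h : (A n m t : ℝ) ≤ (n:ℝ)^t := by exact_mod_cast A_le n m t
  have h2 : (n:ℝ) * (A n m t : ℝ) ≤ (n:ℝ) * (n:ℝ)^t :=
    mul_le_mul_of_nonneg_left h (Nat.cast_nonneg n)
  have h3 : (n:ℝ)^(t+1) = (n:ℝ) * (n:ℝ)^t := by ring
  linarith

/-- The main analytic computation. -/
lemma ana (n m : ℕ) (hn : 1 ≤ n) :
    ∫⁻ x in Set.Ioi (0:ℝ), ENNReal.ofReal ((n:ℝ) * (1 - (1 - expS m x * Real.exp (-x)) ^ n))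
      = ∑' t, ENNReal.ofReal (1 - (A n m t : ℝ)/(n:ℝ)^t) := by
  have hn0 : (0:ℝ) < n := by exact_mod_cast hn
  have step1 : ∫⁻ x in Set.Ioi (0:ℝ),
      ENNReal.ofReal ((n:ℝ) * (1 - (1 - expS m x * Real.exp (-x)) ^ n))
      = ∫⁻ x in Set.Ioi (0:ℝ), ∑' t, ENNReal.ofReal
          ((((n:ℝ)^(t+1) - n * A n m t) / t.factorial) * (x ^ t * Real.exp (-(n*x)))) := by
    apply setLIntegral_congr_fun measurableSet_Ioi
    intro x hx
    have hx0 : (0:ℝ) < x := hx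
    beta_reduce
    rw [integrand_series n m x]
    exact ENNReal.ofReal_tsum_of_nonneg
      (fun t => mul_nonneg (cc_nonneg n m t) (by positivity))
      (summable_cc n m x)
  rw [step1, lintegral_tsum (fun t => ?_)]
  · apply tsum_congr
    intro t
    have hpt : ∀ x : ℝ, ENNReal.ofReal ((((n:ℝ)^(t+1) - n * A n m t) / t.factorial)
          * (x ^ t * Real.exp (-(n*x))))
        = ENNReal.ofReal (((n:ℝ)^(t+1) - n * A n m t) / t.factorial)
          * ENNReal.ofReal (x ^ t * Real.exp (-(n*x))) := by
      intro x
      exact ENNReal.ofReal_mul (cc_nonneg n m t)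
    simp_rw [hpt]
    rw [lintegral_const_mul' _ _ ENNReal.ofReal_ne_top]
    rw [lintegral_poly_exp t n hn0]
    rw [← ENNReal.ofReal_mul (cc_nonneg n m t)]
    congr 1
    have hf : (t.factorial : ℝ) ≠ 0 := by exact_mod_cast t.factorial_ne_zero
    have hnn : ((n:ℝ))^(t+1) ≠ 0 := pow_ne_zero _ (ne_of_gt hn0)
    field_simp
    ring
  · apply Measurable.aemeasurable
    apply Measurable.ennreal_ofReal
    apply Measurable.const_mul
    apply Measurable.mul
    · exact (measurable_id.pow_const t)
    · exact (Real.measurable_exp.comp ((measurable_id.const_mul (n:ℝ)).neg))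

/-! ### Bounds on the integrand -/

lemma u_mem (m : ℕ) (x : ℝ) (hx : 0 ≤ x) :
    0 ≤ expS m x * Real.exp (-x) ∧ expS m x * Real.exp (-x) ≤ 1 := by
  constructor
  · apply mul_nonneg _ (Real.exp_pos _).le
    apply Finset.sum_nonneg
    intro i _
    positivity
  · have h1 : expS m x ≤ Real.exp x := Real.sum_le_exp_of_nonneg hx m
    calc expS m x * Real.exp (-x) ≤ Real.exp x * Real.exp (-x) :=
          mul_le_mul_of_nonneg_right h1 (Real.exp_pos _).le
      _ = 1 := by rw [← Real.exp_add]; simp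

lemma g_nonneg (n m : ℕ) (x : ℝ) (hx : 0 ≤ x) :
    0 ≤ (n:ℝ) * (1 - (1 - expS m x * Real.exp (-x)) ^ n) := by
  obtain ⟨h0, h1⟩ := u_mem m x hx
  apply mul_nonneg (Nat.cast_nonneg n)
  have : (1 - expS m x * Real.exp (-x)) ^ n ≤ 1 :=
    pow_le_one₀ (by linarith) (by linarith)
  linarith

lemma g_le (n m : ℕ) (x : ℝ) (hx : 0 ≤ x) :
    (n:ℝ) * (1 - (1 - expS m x * Real.exp (-x)) ^ n)
      ≤ (n:ℝ)^2 * (expS m x * Real.exp (-x)) := by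
  obtain ⟨h0, h1⟩ := u_mem m x hx
  set u := expS m x * Real.exp (-x) with hu
  have hb := one_add_mul_le_pow (a := -u) (by linarith) n
  have h2 : 1 - (1 - u) ^ n ≤ (n:ℝ) * u := by
    have h3 : (1 : ℝ) + (n:ℝ) * (-u) ≤ (1 + (-u)) ^ n := hb
    have he : ((1:ℝ) + (-u)) = 1 - u := by ring
    rw [he] at h3
    linarith
  calc (n:ℝ) * (1 - (1 - u) ^ n) ≤ (n:ℝ) * ((n:ℝ) * u) :=
        mul_le_mul_of_nonneg_left h2 (Nat.cast_nonneg n)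
    _ = (n:ℝ)^2 * u := by ring

lemma continuous_g (n m : ℕ) :
    Continuous (fun x : ℝ => (n:ℝ) * (1 - (1 - expS m x * Real.exp (-x)) ^ n)) := by
  have hS : Continuous (fun x : ℝ => expS m x) := by
    unfold expS
    exact continuous_finset_sum _ (fun i _ => by fun_prop)
  fun_prop

lemma lintegral_g_ne_top (n m : ℕ) :
    ∫⁻ x in Set.Ioi (0:ℝ),
      ENNReal.ofReal ((n:ℝ) * (1 - (1 - expS m x * Real.exp (-x)) ^ n)) ≠ ∞ := by
  have key : ∀ x : ℝ, 0 < x →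
      ENNReal.ofReal ((n:ℝ) * (1 - (1 - expS m x * Real.exp (-x)) ^ n))
      ≤ ∑ i ∈ Finset.range m, ENNReal.ofReal ((n:ℝ)^2 / i.factorial)
          * ENNReal.ofReal (x ^ i * Real.exp (-(1*x))) := by
    intro x hx
    have hx0 : (0:ℝ) ≤ x := le_of_lt hx
    calc ENNReal.ofReal ((n:ℝ) * (1 - (1 - expS m x * Real.exp (-x)) ^ n))
        ≤ ENNReal.ofReal ((n:ℝ)^2 * (expS m x * Real.exp (-x))) :=
          ENNReal.ofReal_le_ofReal (g_le n m x hx0)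
      _ = ∑ i ∈ Finset.range m, ENNReal.ofReal ((n:ℝ)^2 / i.factorial)
          * ENNReal.ofReal (x ^ i * Real.exp (-(1*x))) := by
          have he : (n:ℝ)^2 * (expS m x * Real.exp (-x))
              = ∑ i ∈ Finset.range m, ((n:ℝ)^2 / i.factorial) * (x ^ i * Real.exp (-(1*x))) := by
            unfold expS
            rw [Finset.sum_mul, Finset.mul_sum]
            apply Finset.sum_congr rfl
            intro i _
            rw [one_mul]
            ring
          rw [he, ENNReal.ofReal_sum_of_nonneg (fun i _ => by
            have hfi : (0:ℝ) ≤ (n:ℝ)^2 / i.factorial :=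
              div_nonneg (by positivity) (Nat.cast_nonneg _)
            positivity)]
          apply Finset.sum_congr rfl
          intro i _
          exact ENNReal.ofReal_mul (div_nonneg (by positivity) (Nat.cast_nonneg _))
  have hb : ∫⁻ x in Set.Ioi (0:ℝ),
      ENNReal.ofReal ((n:ℝ) * (1 - (1 - expS m x * Real.exp (-x)) ^ n))
      ≤ ∑ i ∈ Finset.range m, ENNReal.ofReal ((n:ℝ)^2 / i.factorial)
          * ENNReal.ofReal ((i.factorial : ℝ) / 1 ^ (i+1)) := by
    calc ∫⁻ x in Set.Ioi (0:ℝ),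
        ENNReal.ofReal ((n:ℝ) * (1 - (1 - expS m x * Real.exp (-x)) ^ n))
        ≤ ∫⁻ x in Set.Ioi (0:ℝ), ∑ i ∈ Finset.range m, ENNReal.ofReal ((n:ℝ)^2 / i.factorial)
            * ENNReal.ofReal (x ^ i * Real.exp (-(1*x))) := by
          apply lintegral_mono_ae
          rw [ae_restrict_iff' measurableSet_Ioi]
          exact ae_of_all _ (fun x hx => key x hx)
      _ = ∑ i ∈ Finset.range m, ∫⁻ x in Set.Ioi (0:ℝ), ENNReal.ofReal ((n:ℝ)^2 / i.factorial)
            * ENNReal.ofReal (x ^ i * Real.exp (-(1*x))) := by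
          apply lintegral_finset_sum
          intro i _
          apply Measurable.const_mul
          apply Measurable.ennreal_ofReal
          apply Measurable.mul
          · exact (measurable_id.pow_const i)
          · exact (Real.measurable_exp.comp ((measurable_id.const_mul (1:ℝ)).neg))
      _ = ∑ i ∈ Finset.range m, ENNReal.ofReal ((n:ℝ)^2 / i.factorial)
            * ENNReal.ofReal ((i.factorial : ℝ) / 1 ^ (i+1)) := by
          apply Finset.sum_congr rfl
          intro i _
          rw [lintegral_const_mul' _ _ ENNReal.ofReal_ne_top]
          rw [lintegral_poly_exp i 1 one_pos]
  refine ne_top_of_le_ne_top ?_ hb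
  apply LT.lt.ne
  apply ENNReal.sum_lt_top.mpr
  intro i _
  exact ENNReal.mul_lt_top ENNReal.ofReal_lt_top ENNReal.ofReal_lt_top

/-! ### Layer cake for `ℕ`-valued functions -/

lemma lintegral_nat {Ω : Type*} [MeasurableSpace Ω] (μ : Measure Ω) (f : Ω → ℕ)
    (hf : ∀ t, MeasurableSet {ω | t < f ω}) :
    ∫⁻ ω, (f ω : ℝ≥0∞) ∂μ = ∑' t, μ {ω | t < f ω} := by
  have h1 : ∀ ω, ((f ω : ℕ) : ℝ≥0∞) = ∑' t : ℕ,
      Set.indicator {ω | t < f ω} (1 : Ω → ℝ≥0∞) ω := by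
    intro ω
    rw [tsum_eq_sum (s := Finset.range (f ω)) (fun t ht => by
      apply Set.indicator_of_notMem
      simpa using ht)]
    rw [Finset.sum_congr rfl (fun t ht => Set.indicator_of_mem (by simpa using ht) _)]
    simp
  calc ∫⁻ ω, ((f ω : ℕ) : ℝ≥0∞) ∂μ
      = ∫⁻ ω, ∑' t : ℕ, Set.indicator {ω | t < f ω} (1 : Ω → ℝ≥0∞) ω ∂μ :=
        lintegral_congr h1
    _ = ∑' t : ℕ, ∫⁻ ω, Set.indicator {ω | t < f ω} (1 : Ω → ℝ≥0∞) ω ∂μ :=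
        lintegral_tsum (fun t => ((measurable_one.indicator (hf t)).aemeasurable))
    _ = ∑' t, μ {ω | t < f ω} :=
        tsum_congr (fun t => lintegral_indicator_one (hf t))

/-! ### The event sets -/

/-- The event that after `t` draws every coupon type was seen at least `m` times. -/
def Et (n m t : ℕ) : Set (ℕ → Fin n) :=
  {ω | ∀ c : Fin n, m ≤ ((Finset.range t).filter (fun i => ω i = c)).card}

lemma card_range_filter {n : ℕ} (ω : ℕ → Fin n) (t : ℕ) (c : Fin n) :
    ((Finset.range t).filter (fun i => ω i = c)).card
      = ((univ : Finset (Fin t)).filter (fun j => ω j.1 = c)).card := by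
  symm
  apply Finset.card_bij (fun (j : Fin t) _ => j.1)
  · intro j hj
    simp only [mem_filter, mem_univ, true_and] at hj
    simp only [mem_filter, mem_range]
    exact ⟨j.2, hj⟩
  · intro j _ j' _ h
    exact Fin.ext h
  · intro i hi
    simp only [mem_filter, mem_range] at hi
    exact ⟨⟨i, hi.1⟩, by simp only [mem_filter, mem_univ, true_and]; exact hi.2, rfl⟩

lemma Et_mono {n m : ℕ} (s s' : ℕ) (hss : s ≤ s') : Et n m s ⊆ Et n m s' := by
  intro ω h c
  exact le_trans (h c)
    (Finset.card_le_card (Finset.filter_subset_filter _ (Finset.range_subset_range.mpr hss)))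

end DDC

open DDC Finset in
/-- Double dixie cup / collector's brotherhood: coupons of `n` equally likely types
are drawn i.i.d. uniformly.  The expected number of samples `T` until every type has
been drawn at least `m` times equals `n ∫_0^∞ (1 - (1 - S_m(x) e^{-x})^n) dx`. -/
theorem stmt_16 (n m : ℕ) (hn : 1 ≤ n) (hm : 1 ≤ m)
    [mFin : MeasurableSpace (Fin n)] (hmFin : mFin = ⊤)
    (μ : Measure (ℕ → Fin n)) [IsProbabilityMeasure μ]
    (hiid : ∀ (S : Finset ℕ) (v : ℕ → Fin n),
      μ {ω | ∀ i ∈ S, ω i = v i} = ((1 : ENNReal) / (n : ENNReal)) ^ S.card) :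
    ∫⁻ ω, ((sInf {t : ℕ | ∀ c : Fin n,
          m ≤ ((Finset.range t).filter (fun i => ω i = c)).card} : ℕ) : ENNReal) ∂μ
      = ENNReal.ofReal
          ((n : ℝ) * ∫ x in Set.Ioi (0 : ℝ),
            (1 - (1 - expS m x * Real.exp (-x)) ^ n)) := by
  subst hmFin
  have hn' : 0 < n := hn
  -- measurability of cylinders
  have hcylmeas : ∀ (t : ℕ) (v : ℕ → Fin n),
      MeasurableSet {ω : ℕ → Fin n | ∀ i ∈ Finset.range t, ω i = v i} := by
    intro t v
    have he : {ω : ℕ → Fin n | ∀ i ∈ Finset.range t, ω i = v i}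
        = ⋂ i ∈ Finset.range t, ((fun ω : ℕ → Fin n => ω i) ⁻¹' {v i}) := by
      ext ω; simp [Set.mem_iInter]
    rw [he]
    apply MeasurableSet.biInter (Set.to_countable _)
    intro i _
    exact (measurable_pi_apply i) MeasurableSpace.measurableSet_top
  -- decomposition of events defined by the first t coordinates
  have hGdecomp : ∀ (t : ℕ) (G : Finset (Fin t → Fin n)),
      {ω : ℕ → Fin n | (fun i : Fin t => ω i.1) ∈ G}
        = ⋃ g ∈ G, {ω : ℕ → Fin n | ∀ i ∈ Finset.range t,
            ω i = (fun j : ℕ => if h : j < t then g ⟨j, h⟩ else (⟨0, hn'⟩ : Fin n)) i} := by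
    intro t G
    ext ω
    simp only [Set.mem_setOf_eq, Set.mem_iUnion]
    constructor
    · intro h
      refine ⟨_, h, fun i hi => ?_⟩
      rw [dif_pos (Finset.mem_range.mp hi)]
    · rintro ⟨g, hg, hω⟩
      have he : (fun i : Fin t => ω i.1) = g := by
        funext j
        have h2 := hω j.1 (Finset.mem_range.mpr j.2)
        rw [h2, dif_pos j.2]
      rw [he]; exact hg
  have hGmeas : ∀ (t : ℕ) (G : Finset (Fin t → Fin n)),
      MeasurableSet {ω : ℕ → Fin n | (fun i : Fin t => ω i.1) ∈ G} := by
    intro t G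
    rw [hGdecomp t G]
    exact G.measurableSet_biUnion (fun g _ => hcylmeas t _)
  have hGmeasure : ∀ (t : ℕ) (G : Finset (Fin t → Fin n)),
      μ {ω : ℕ → Fin n | (fun i : Fin t => ω i.1) ∈ G}
        = G.card * ((n : ℝ≥0∞))⁻¹ ^ t := by
    intro t G
    rw [hGdecomp t G]
    rw [measure_biUnion_finset ?_ (fun g _ => hcylmeas t _)]
    · rw [Finset.sum_congr rfl (fun g _ => by
        rw [hiid (Finset.range t) _, Finset.card_range])]
      rw [Finset.sum_const, nsmul_eq_mul, one_div]
    · intro g hg g' hg' hne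
      apply Set.disjoint_left.mpr
      intro ω h1 h2
      apply hne
      funext j
      have e1 := h1 j.1 (Finset.mem_range.mpr j.2)
      have e2 := h2 j.1 (Finset.mem_range.mpr j.2)
      have e3 := e1.symm.trans e2
      rw [dif_pos j.2, dif_pos j.2] at e3
      simpa using e3
  -- the events Et
  have hEt_eq : ∀ t : ℕ, Et n m t = {ω : ℕ → Fin n | (fun i : Fin t => ω i.1) ∈
      ((univ : Finset (Fin t → Fin n)).filter
        (fun f => ∀ c, m ≤ (univ.filter (fun a => f a = c)).card))} := by
    intro t
    ext ω
    simp only [Et, Set.mem_setOf_eq, Finset.mem_filter, Finset.mem_univ, true_and]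
    constructor
    · intro h c
      rw [← card_range_filter ω t c]
      exact h c
    · intro h c
      rw [card_range_filter ω t c]
      exact h c
  have hEtmeas : ∀ t, MeasurableSet (Et n m t) := by
    intro t
    rw [hEt_eq t]
    exact hGmeas t _
  have hq : ∀ t, μ (Et n m t) = (A n m t : ℝ≥0∞) * ((n : ℝ≥0∞))⁻¹ ^ t := by
    intro t
    rw [hEt_eq t, hGmeasure t _]
    congr 1
  -- the d values
  set d : ℕ → ℝ≥0∞ := fun t => ENNReal.ofReal (1 - (A n m t : ℝ)/(n:ℝ)^t) with hd_def
  have hnR : (0:ℝ) < n := by exact_mod_cast hn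
  have hd : ∀ t, (1 : ℝ≥0∞) - μ (Et n m t) = d t := by
    intro t
    rw [hq t]
    show (1:ℝ≥0∞) - (A n m t : ℝ≥0∞) * ((n : ℝ≥0∞))⁻¹ ^ t
      = ENNReal.ofReal (1 - (A n m t : ℝ)/(n:ℝ)^t)
    have h1 : ENNReal.ofReal (1 - (A n m t : ℝ)/(n:ℝ)^t)
        = ENNReal.ofReal 1 - ENNReal.ofReal ((A n m t : ℝ)/(n:ℝ)^t) :=
      ENNReal.ofReal_sub _ (div_nonneg (Nat.cast_nonneg _) (by positivity))
    have h2 : ENNReal.ofReal ((A n m t : ℝ)/(n:ℝ)^t)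
        = (A n m t : ℝ≥0∞) * ((n : ℝ≥0∞))⁻¹ ^ t := by
      rw [div_eq_mul_inv, ENNReal.ofReal_mul (Nat.cast_nonneg _)]
      congr 1
      · exact ENNReal.ofReal_natCast _
      · rw [ENNReal.ofReal_inv_of_pos (by positivity), ← ENNReal.inv_pow]
        congr 1
        rw [ENNReal.ofReal_pow (Nat.cast_nonneg _)]
        congr 1
        exact ENNReal.ofReal_natCast _
    rw [h1, h2, ENNReal.ofReal_one]
  have hsum_ne_top : ∑' t, d t ≠ ∞ := by
    rw [hd_def, ← ana n m hn]
    exact lintegral_g_ne_top n m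
  have htend : Filter.Tendsto d Filter.atTop (nhds 0) :=
    ENNReal.tendsto_atTop_zero_of_tsum_ne_top hsum_ne_top
  have hUnion_meas : MeasurableSet (⋃ s, Et n m s) := MeasurableSet.iUnion hEtmeas
  have hcompl_zero : μ (⋃ s, Et n m s)ᶜ = 0 := by
    have hle : ∀ t, μ (⋃ s, Et n m s)ᶜ ≤ d t := by
      intro t
      rw [← hd t, ← prob_compl_eq_one_sub (hEtmeas t)]
      exact measure_mono (Set.compl_subset_compl.mpr (Set.subset_iUnion _ t))
    exact le_antisymm (ge_of_tendsto' htend hle) zero_le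
  have hUnion_one : μ (⋃ s, Et n m s) = 1 := by
    have h := measure_add_measure_compl (μ := μ) hUnion_meas
    rw [hcompl_zero, add_zero, measure_univ] at h
    exact h
  -- the waiting time
  set T : (ℕ → Fin n) → ℕ := fun ω => sInf {t : ℕ | ∀ c : Fin n,
      m ≤ ((Finset.range t).filter (fun i => ω i = c)).card} with hT_def
  have hTset : ∀ ω, {t : ℕ | ∀ c : Fin n,
      m ≤ ((Finset.range t).filter (fun i => ω i = c)).card} = {t | ω ∈ Et n m t} := by
    intro ω; rfl
  have hTgt : ∀ t, {ω : ℕ → Fin n | t < T ω} = (⋃ s, Et n m s) \ Et n m t := by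
    intro t
    ext ω
    simp only [Set.mem_setOf_eq, Set.mem_diff, Set.mem_iUnion, hT_def, hTset ω]
    constructor
    · intro h
      have hne : {s : ℕ | ω ∈ Et n m s}.Nonempty := by
        by_contra hempty
        rw [Set.not_nonempty_iff_eq_empty] at hempty
        rw [hempty, Nat.sInf_empty] at h
        omega
      refine ⟨hne.imp (fun s hs => hs), fun hmem => ?_⟩
      have := Nat.sInf_le (show t ∈ {s : ℕ | ω ∈ Et n m s} from hmem)
      omega
    · rintro ⟨⟨s, hs⟩, hnot⟩
      by_contra hle
      push_neg at hle
      exact hnot (Et_mono _ _ hle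
        (Nat.sInf_mem (show {u : ℕ | ω ∈ Et n m u}.Nonempty from ⟨s, hs⟩)))
  have hTmeas : ∀ t, MeasurableSet {ω : ℕ → Fin n | t < T ω} := by
    intro t
    rw [hTgt t]
    exact hUnion_meas.diff (hEtmeas t)
  have hμT : ∀ t, μ {ω : ℕ → Fin n | t < T ω} = d t := by
    intro t
    rw [hTgt t, measure_diff (Set.subset_iUnion _ t) (hEtmeas t).nullMeasurableSet
      (measure_ne_top μ _), hUnion_one, hd t]
  -- putting everything together
  have hLHS : ∫⁻ ω, ((T ω : ℕ) : ℝ≥0∞) ∂μ = ∑' t, d t := by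
    rw [lintegral_nat μ T hTmeas]
    exact tsum_congr hμT
  have hRHS : ENNReal.ofReal
      ((n : ℝ) * ∫ x in Set.Ioi (0 : ℝ), (1 - (1 - expS m x * Real.exp (-x)) ^ n))
      = ∑' t, d t := by
    have hnnae : 0 ≤ᵐ[volume.restrict (Set.Ioi (0:ℝ))]
        fun x => (n:ℝ) * (1 - (1 - expS m x * Real.exp (-x)) ^ n) :=
      (ae_restrict_iff' measurableSet_Ioi).mpr
        (ae_of_all _ (fun x hx => g_nonneg n m x (le_of_lt hx)))
    have hint : Integrable (fun x => (n:ℝ) * (1 - (1 - expS m x * Real.exp (-x)) ^ n))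
        (volume.restrict (Set.Ioi 0)) := by
      refine ⟨(continuous_g n m).aestronglyMeasurable, ?_⟩
      rw [hasFiniteIntegral_iff_ofReal hnnae]
      exact lt_of_le_of_ne le_top (lintegral_g_ne_top n m)
    rw [← integral_const_mul]
    rw [ofReal_integral_eq_lintegral_ofReal hint hnnae]
    rw [ana n m hn]
  exact hLHS.trans hRHS.symm
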